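/- arXiv:1105.2202 — 2 statements merged into one kernel-verified Lean document; each statement's English description precedes it below -/
import Mathlib

section
/- For every graph G on n vertices, I(G ∘ 2K₁; x) = (1+x)^{2n} · I(G; x/(1+x)²), as an identity of polynomials. -/
open Polynomial

open scoped Classical in
/-- The independence polynomial of a finite simple graph. -/
noncomputable def indepPoly {V : Type*} [Fintype V] (G : SimpleGraph V) : Polynomial ℤ :=
  ∑ s : Finset V, if (s : Set V).Pairwise (fun u v => ¬ G.Adj u v) then X ^ s.card else 0

/-- Corona of two graphs. -/
def corona {V W : Type*} (G : SimpleGraph V) (H : SimpleGraph W) : SimpleGraph (V ⊕ V × W) where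
  Adj x y :=
    match x, y with
    | .inl u, .inl v => G.Adj u v
    | .inl u, .inr (v, _) => u = v
    | .inr (v, _), .inl u => u = v
    | .inr (u, a), .inr (v, b) => u = v ∧ H.Adj a b
  symm := ⟨by
    rintro (u | ⟨u, a⟩) (v | ⟨v, b⟩) h
    · exact G.adj_symm h
    · exact h
    · exact h
    · exact ⟨h.1.symm, h.2.symm⟩⟩
  loopless := ⟨by
    rintro (u | ⟨u, a⟩) h
    · exact G.irrefl h
    · exact H.irrefl h.2⟩

lemma sum_pow_card_aux {W : Type*} [DecidableEq W] (S : Finset W) :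
    ∑ B ∈ S.powerset, (X : ℤ[X]) ^ B.card = (1 + X) ^ S.card := by
  have := Finset.prod_add (fun _ : W => (X : ℤ[X])) (fun _ => 1) S
  simp only [Finset.prod_const, one_pow, mul_one, add_comm (X:ℤ[X]) 1] at this
  exact this.symm

lemma cond_aux {V : Type*} (G : SimpleGraph V) (A : Finset V) (B : Finset (V × Fin 2)) :
    ((A.disjSum B : Finset (V ⊕ V × Fin 2)) : Set (V ⊕ V × Fin 2)).Pairwise
      (fun u v => ¬ (corona G (⊥ : SimpleGraph (Fin 2))).Adj u v) ↔
    ((A : Set V).Pairwise (fun u v => ¬ G.Adj u v) ∧ ∀ p ∈ B, p.1 ∉ A) := by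
  constructor
  · intro h
    refine ⟨fun u hu v hv hne hadj => ?_, fun p hp hpA => ?_⟩
    · exact h (x := Sum.inl u) (y := Sum.inl v)
        (by simpa using hu) (by simpa using hv)
        (by simp [hne]) hadj
    · obtain ⟨v, i⟩ := p
      exact h (x := Sum.inl v) (y := Sum.inr (v, i))
        (by simpa [Finset.inl_mem_disjSum] using hpA)
        (by simp [Finset.inr_mem_disjSum, hp])
        (by simp) rfl
  · rintro ⟨h1, h2⟩ x hx y hy hne hadj
    match x, y with
    | Sum.inl u, Sum.inl v =>
        exact h1 (by simpa using hx) (by simpa using hy) (by simpa using hne) hadj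
    | Sum.inl u, Sum.inr (v, b) =>
        exact h2 (v, b) (by simpa using hy) (hadj ▸ by simpa using hx)
    | Sum.inr (v, b), Sum.inl u =>
        exact h2 (v, b) (by simpa using hx) (hadj ▸ by simpa using hy)
    | Sum.inr (u, a), Sum.inr (v, b) =>
        exact hadj.2

open scoped Classical in
theorem lhs_aux {V : Type*} [Fintype V] (G : SimpleGraph V) :
    (∑ s : Finset (V ⊕ V × Fin 2), if (s : Set (V ⊕ V × Fin 2)).Pairwise
        (fun u v => ¬ (corona G (⊥ : SimpleGraph (Fin 2))).Adj u v) then (X:ℤ[X]) ^ s.card else 0) =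
      ∑ A : Finset V, (if (A : Set V).Pairwise (fun u v => ¬ G.Adj u v)
        then X ^ A.card * ((1 + X) ^ 2) ^ (Fintype.card V - A.card) else 0) := by
  classical
  set n := Fintype.card V with hn
  have hbij : Function.Bijective
      (fun p : Finset V × Finset (V × Fin 2) => p.1.disjSum p.2) := by
    constructor
    · have : Function.LeftInverse (fun s : Finset (V ⊕ V × Fin 2) => (s.toLeft, s.toRight))
          (fun p : Finset V × Finset (V × Fin 2) => p.1.disjSum p.2) := fun p => by simp
      exact this.injective
    · intro s; exact ⟨(s.toLeft, s.toRight), s.toLeft_disjSum_toRight⟩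
  rw [← Fintype.sum_bijective _ hbij
    (fun p : Finset V × Finset (V × Fin 2) =>
      if ((p.1.disjSum p.2 : Finset (V ⊕ V × Fin 2)) : Set (V ⊕ V × Fin 2)).Pairwise
        (fun u v => ¬ (corona G (⊥ : SimpleGraph (Fin 2))).Adj u v)
      then (X:ℤ[X]) ^ (p.1.disjSum p.2).card else 0) _ (fun p => rfl)]
  rw [Fintype.sum_prod_type]
  refine Finset.sum_congr rfl fun A _ => ?_
  simp only [cond_aux, Finset.card_disjSum]
  by_cases hA : (A : Set V).Pairwise (fun u v => ¬ G.Adj u v)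
  · simp only [hA, true_and, if_pos]
    have hQ : ∀ B : Finset (V × Fin 2), (∀ p ∈ B, p.1 ∉ A) ↔
        B ∈ ((Aᶜ : Finset V) ×ˢ (Finset.univ : Finset (Fin 2))).powerset := by
      intro B
      simp [Finset.mem_powerset, Finset.subset_iff, Finset.mem_product, Prod.forall]
    simp only [hQ]
    rw [Finset.sum_ite_mem, Finset.univ_inter]
    have : ∑ B ∈ ((Aᶜ : Finset V) ×ˢ (Finset.univ : Finset (Fin 2))).powerset,
        (X:ℤ[X]) ^ (A.card + B.card) =
        X ^ A.card * ∑ B ∈ ((Aᶜ : Finset V) ×ˢ (Finset.univ : Finset (Fin 2))).powerset,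
          (X:ℤ[X]) ^ B.card := by
      rw [Finset.mul_sum]
      exact Finset.sum_congr rfl fun B _ => by rw [pow_add]
    rw [this, sum_pow_card_aux, Finset.card_product, Finset.card_compl, Finset.card_univ,
      Fintype.card_fin, ← pow_mul, Nat.mul_comm, ← hn]
  · simp [hA]

open scoped Classical in
theorem rhs_aux {V : Type*} [Fintype V] (G : SimpleGraph V) :
    (∑ k ∈ Finset.range (Fintype.card V + 1),
        C ((indepPoly G).coeff k) * X ^ k *
          ((1 + X) ^ 2) ^ (Fintype.card V - k)) =
      ∑ A : Finset V, (if (A : Set V).Pairwise (fun u v => ¬ G.Adj u v)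
        then X ^ A.card * ((1 + X) ^ 2) ^ (Fintype.card V - A.card) else 0) := by
  classical
  set n := Fintype.card V with hn
  have hcoeff : ∀ k, (indepPoly G).coeff k =
      ∑ A : Finset V, (if ((A : Set V).Pairwise (fun u v => ¬ G.Adj u v)) ∧ k = A.card
        then (1:ℤ) else 0) := by
    intro k
    rw [indepPoly, Polynomial.finset_sum_coeff]
    refine Finset.sum_congr rfl fun A _ => ?_
    by_cases h : (A : Set V).Pairwise (fun u v => ¬ G.Adj u v)
    · simp [h, coeff_X_pow]
    · simp [h]
  calc (∑ k ∈ Finset.range (n + 1),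
        C ((indepPoly G).coeff k) * X ^ k * ((1 + X) ^ 2) ^ (n - k))
      = ∑ k ∈ Finset.range (n + 1), ∑ A : Finset V,
          (if ((A : Set V).Pairwise (fun u v => ¬ G.Adj u v)) ∧ k = A.card
            then (1:ℤ[X]) else 0) * (X ^ k * ((1 + X) ^ 2) ^ (n - k)) := by
        refine Finset.sum_congr rfl fun k _ => ?_
        rw [hcoeff k, map_sum, Finset.sum_mul, Finset.sum_mul]
        refine Finset.sum_congr rfl fun A _ => ?_
        rw [apply_ite C, map_one, map_zero, mul_assoc]
    _ = ∑ A : Finset V, ∑ k ∈ Finset.range (n + 1),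
          (if ((A : Set V).Pairwise (fun u v => ¬ G.Adj u v)) ∧ k = A.card
            then (1:ℤ[X]) else 0) * (X ^ k * ((1 + X) ^ 2) ^ (n - k)) := Finset.sum_comm
    _ = ∑ A : Finset V, (if (A : Set V).Pairwise (fun u v => ¬ G.Adj u v)
          then X ^ A.card * ((1 + X) ^ 2) ^ (n - A.card) else 0) := by
        refine Finset.sum_congr rfl fun A _ => ?_
        by_cases hA : (A : Set V).Pairwise (fun u v => ¬ G.Adj u v)
        · simp only [hA, true_and, if_pos, ite_mul, one_mul, zero_mul]
          rw [Finset.sum_ite_eq' (Finset.range (n + 1)) A.card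
            (fun k => X ^ k * ((1 + X) ^ 2) ^ (n - k))]
          rw [if_pos (Finset.mem_range.mpr (Nat.lt_succ_of_le (by
            simpa [hn] using Finset.card_le_univ A)))]
        · simp [hA]

theorem corona_two_indepPoly {V : Type*} [Fintype V] (G : SimpleGraph V) :
    indepPoly (corona G (⊥ : SimpleGraph (Fin 2))) =
      ∑ k ∈ Finset.range (Fintype.card V + 1),
        C ((indepPoly G).coeff k) * X ^ k *
          ((1 + X) ^ 2) ^ (Fintype.card V - k) := by
  classical
  have h1 : indepPoly (corona G (⊥ : SimpleGraph (Fin 2))) =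
      (∑ s : Finset (V ⊕ V × Fin 2), if (s : Set (V ⊕ V × Fin 2)).Pairwise
        (fun u v => ¬ (corona G (⊥ : SimpleGraph (Fin 2))).Adj u v) then (X:ℤ[X]) ^ s.card else 0) := by
    rw [indepPoly]
    congr!
  rw [h1, lhs_aux G, rhs_aux G]
end

section
/- If A is a clique in a graph G, then I((G,A) ∘ 2K₁; x) = (1+x)^{2|A|−2} · I((G,A) + 2K₁; x). -/
open Polynomial

/-- Partial corona `(G,A) ∘ H`: each vertex of `A` gets its own copy of `H`. -/
def partialCorona {V W : Type*} (G : SimpleGraph V) (A : Finset V) (H : SimpleGraph W) :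
    SimpleGraph (V ⊕ A × W) where
  Adj x y :=
    match x, y with
    | .inl u, .inl v => G.Adj u v
    | .inl u, .inr (a, _) => u = ↑a
    | .inr (a, _), .inl u => u = ↑a
    | .inr (a, w), .inr (b, w') => a = b ∧ H.Adj w w'
  symm := by
    constructor
    rintro (u | ⟨a, w⟩) (v | ⟨b, w'⟩) h
    · exact G.symm.symm _ _ h
    · exact h
    · exact h
    · exact ⟨h.1.symm, h.2.symm⟩
  loopless := by
    constructor
    rintro (u | ⟨a, w⟩) h
    · exact G.loopless.irrefl u h
    · exact H.loopless.irrefl w h.2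

/-- Partial Zykov sum `(G,A) + H`: every vertex of `A` is joined to every vertex of `H`. -/
def partialZykovSum {V W : Type*} (G : SimpleGraph V) (A : Finset V) (H : SimpleGraph W) :
    SimpleGraph (V ⊕ W) where
  Adj x y :=
    match x, y with
    | .inl u, .inl v => G.Adj u v
    | .inl u, .inr _ => u ∈ A
    | .inr _, .inl u => u ∈ A
    | .inr a, .inr b => H.Adj a b
  symm := by
    constructor
    rintro (u | a) (v | b) h
    · exact G.symm.symm _ _ h
    · exact h
    · exact h
    · exact H.symm.symm _ _ h
  loopless := by
    constructor
    rintro (u | a) h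
    · exact G.loopless.irrefl u h
    · exact H.loopless.irrefl a h

lemma sum_disjSum_eq {α β M : Type*} [Fintype α] [Fintype β] [DecidableEq α] [DecidableEq β]
    [AddCommMonoid M] (f : Finset (α ⊕ β) → M) :
    ∑ s : Finset (α ⊕ β), f s = ∑ t : Finset α, ∑ u : Finset β, f (t.disjSum u) := by
  classical
  rw [show (∑ t : Finset α, ∑ u : Finset β, f (t.disjSum u))
      = ∑ p : Finset α × Finset β, f (p.1.disjSum p.2) from (Fintype.sum_prod_type (fun p : Finset α × Finset β => f (p.1.disjSum p.2))).symm]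
  exact (Fintype.sum_bijective (fun p : Finset α × Finset β => p.1.disjSum p.2)
    ⟨fun a b h => by
      obtain ⟨h1, h2⟩ := Finset.disjSum_inj.1 h
      exact Prod.ext h1 h2,
     fun s => ⟨(s.toLeft, s.toRight), Finset.toLeft_disjSum_toRight⟩⟩
    _ _ (fun p => rfl)).symm

lemma sum_powerset_pow {γ : Type*} [DecidableEq γ] (S : Finset γ) :
    ∑ p ∈ S.powerset, (X : Polynomial ℤ) ^ p.card = (1 + X) ^ S.card := by
  have h := Finset.prod_add (fun _ : γ => (X : Polynomial ℤ)) (fun _ => 1) S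
  simp only [Finset.prod_const, one_pow, mul_one] at h
  rw [add_comm] at h
  exact h.symm

lemma sum_univ_pow_card {γ : Type*} [Fintype γ] [DecidableEq γ] :
    ∑ q : Finset γ, (X : Polynomial ℤ) ^ q.card = (1 + X) ^ Fintype.card γ := by
  rw [← Finset.card_univ, ← sum_powerset_pow (Finset.univ : Finset γ), Finset.powerset_univ]

section Aux
variable {V : Type*} (G : SimpleGraph V) (A : Finset V)

lemma corona_pairwise (t : Finset V) (p : Finset (↑A × Fin 2)) :
    ((t.disjSum p : Finset (V ⊕ ↑A × Fin 2)) : Set (V ⊕ ↑A × Fin 2)).Pairwise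
      (fun u v => ¬ (partialCorona G A (⊥ : SimpleGraph (Fin 2))).Adj u v) ↔
    ((t : Set V).Pairwise (fun u v => ¬ G.Adj u v) ∧ ∀ x ∈ p, (↑x.1 : V) ∉ t) := by
  constructor
  · intro h
    refine ⟨fun u hu v hv huv => ?_, fun x hx hxt => ?_⟩
    · exact h (Finset.mem_coe.2 (Finset.inl_mem_disjSum.2 (Finset.mem_coe.1 hu)))
        (Finset.mem_coe.2 (Finset.inl_mem_disjSum.2 (Finset.mem_coe.1 hv)))
        (fun he => huv (Sum.inl_injective he))
    · exact h (Finset.mem_coe.2 (Finset.inl_mem_disjSum.2 hxt))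
        (Finset.mem_coe.2 (Finset.inr_mem_disjSum.2 hx))
        (fun he => Sum.inl_ne_inr he) rfl
  · rintro ⟨h1, h2⟩ x hx y hy hxy
    rcases x with u | a <;> rcases y with v | b
    · exact h1 (Finset.mem_coe.2 (Finset.inl_mem_disjSum.1 (Finset.mem_coe.1 hx)))
        (Finset.mem_coe.2 (Finset.inl_mem_disjSum.1 (Finset.mem_coe.1 hy)))
        (fun he => hxy (congrArg Sum.inl he))
    · exact fun he => h2 b (Finset.inr_mem_disjSum.1 (Finset.mem_coe.1 hy))
        (he ▸ Finset.inl_mem_disjSum.1 (Finset.mem_coe.1 hx))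
    · exact fun he => h2 a (Finset.inr_mem_disjSum.1 (Finset.mem_coe.1 hx))
        (he ▸ Finset.inl_mem_disjSum.1 (Finset.mem_coe.1 hy))
    · rintro ⟨-, h⟩; exact h.elim

lemma zykov_pairwise (t : Finset V) (q : Finset (Fin 2)) :
    ((t.disjSum q : Finset (V ⊕ Fin 2)) : Set (V ⊕ Fin 2)).Pairwise
      (fun u v => ¬ (partialZykovSum G A (⊥ : SimpleGraph (Fin 2))).Adj u v) ↔
    ((t : Set V).Pairwise (fun u v => ¬ G.Adj u v) ∧ ∀ u ∈ t, ∀ w ∈ q, u ∉ A) := by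
  constructor
  · intro h
    refine ⟨fun u hu v hv huv => ?_, fun u hu w hw huA => ?_⟩
    · exact h (Finset.mem_coe.2 (Finset.inl_mem_disjSum.2 (Finset.mem_coe.1 hu)))
        (Finset.mem_coe.2 (Finset.inl_mem_disjSum.2 (Finset.mem_coe.1 hv)))
        (fun he => huv (Sum.inl_injective he))
    · exact h (Finset.mem_coe.2 (Finset.inl_mem_disjSum.2 hu))
        (Finset.mem_coe.2 (Finset.inr_mem_disjSum.2 hw))
        (fun he => Sum.inl_ne_inr he) huA
  · rintro ⟨h1, h2⟩ x hx y hy hxy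
    rcases x with u | a <;> rcases y with v | b
    · exact h1 (Finset.mem_coe.2 (Finset.inl_mem_disjSum.1 (Finset.mem_coe.1 hx)))
        (Finset.mem_coe.2 (Finset.inl_mem_disjSum.1 (Finset.mem_coe.1 hy)))
        (fun he => hxy (congrArg Sum.inl he))
    · exact h2 u (Finset.inl_mem_disjSum.1 (Finset.mem_coe.1 hx)) b
        (Finset.inr_mem_disjSum.1 (Finset.mem_coe.1 hy))
    · exact h2 v (Finset.inl_mem_disjSum.1 (Finset.mem_coe.1 hy)) a
        (Finset.inr_mem_disjSum.1 (Finset.mem_coe.1 hx))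
    · exact fun h => h.elim

end Aux

section MainAux
open Polynomial
variable {V : Type*} (G : SimpleGraph V) (A : Finset V)

lemma card_filter_prod [DecidableEq V] (t : Finset V) :
    (Finset.univ.filter (fun x : ↑A × Fin 2 => (↑x.1 : V) ∉ t)).card = 2 * (A \ t).card := by
  classical
  have h1 : Finset.univ.filter (fun x : ↑A × Fin 2 => (↑x.1 : V) ∉ t) =
      (Finset.univ.filter fun a : ↑A => (↑a : V) ∉ t) ×ˢ Finset.univ := by
    ext ⟨a, w⟩; simp
  have h2 : (Finset.univ.filter fun a : ↑A => (↑a : V) ∉ t).card = (A \ t).card := by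
    refine Finset.card_bij (fun a _ => (↑a : V)) ?_ ?_ ?_
    · intro a ha
      simp only [Finset.mem_filter] at ha
      exact Finset.mem_sdiff.2 ⟨a.2, ha.2⟩
    · intro a _ b _ h; exact Subtype.ext h
    · intro b hb
      obtain ⟨hbA, hbt⟩ := Finset.mem_sdiff.1 hb
      exact ⟨⟨b, hbA⟩, by simp [hbt], rfl⟩
  rw [h1, Finset.card_product, Finset.card_univ, Fintype.card_fin, h2, mul_comm]

end MainAux

theorem partialCorona_two_indepPoly {V : Type*} [Fintype V]
    (G : SimpleGraph V) (A : Finset V)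
    (hA : A.Nonempty) (hclique : G.IsClique (A : Set V)) :
    indepPoly (partialCorona G A (⊥ : SimpleGraph (Fin 2))) =
      (1 + X) ^ (2 * A.card - 2) *
        indepPoly (partialZykovSum G A (⊥ : SimpleGraph (Fin 2))) := by
  classical
  unfold indepPoly
  rw [sum_disjSum_eq, sum_disjSum_eq, Finset.mul_sum]
  refine Finset.sum_congr rfl fun t _ => ?_
  simp only [corona_pairwise, zykov_pairwise, Finset.card_disjSum]
  have hL : (∑ p : Finset (↑A × Fin 2),
      if ((t : Set V).Pairwise (fun u v => ¬G.Adj u v) ∧ ∀ x ∈ p, (↑x.1 : V) ∉ t)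
        then (X : Polynomial ℤ) ^ (t.card + p.card) else 0) =
      if (t : Set V).Pairwise (fun u v => ¬G.Adj u v)
        then X ^ t.card * (1 + X) ^ (2 * (A \ t).card) else 0 := by
    by_cases hP : (t : Set V).Pairwise (fun u v => ¬G.Adj u v)
    · rw [if_pos hP]
      have hmem : ∀ p : Finset (↑A × Fin 2), (∀ x ∈ p, (↑x.1 : V) ∉ t) ↔
          p ∈ (Finset.univ.filter (fun x : ↑A × Fin 2 => (↑x.1 : V) ∉ t)).powerset := by
        intro p; simp [Finset.mem_powerset, Finset.subset_iff]
      simp only [hP, true_and, hmem]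
      rw [Finset.sum_ite_mem, Finset.univ_inter]
      simp only [pow_add, ← Finset.mul_sum]
      rw [sum_powerset_pow, card_filter_prod]
    · rw [if_neg hP]
      simp [hP]
  have hR : (∑ q : Finset (Fin 2),
      if ((t : Set V).Pairwise (fun u v => ¬G.Adj u v) ∧ ∀ u ∈ t, ∀ w ∈ q, u ∉ A)
        then (X : Polynomial ℤ) ^ (t.card + q.card) else 0) =
      if (t : Set V).Pairwise (fun u v => ¬G.Adj u v)
        then (if ∀ u ∈ t, u ∉ A then X ^ t.card * (1 + X) ^ 2 else X ^ t.card) else 0 := by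
    by_cases hP : (t : Set V).Pairwise (fun u v => ¬G.Adj u v)
    · rw [if_pos hP]
      simp only [hP, true_and]
      by_cases hD : ∀ u ∈ t, u ∉ A
      · rw [if_pos hD]
        have hall : ∀ q : Finset (Fin 2), ∀ u ∈ t, ∀ w ∈ q, u ∉ A :=
          fun q u hu w _ => hD u hu
        calc (∑ q : Finset (Fin 2),
              if (∀ u ∈ t, ∀ w ∈ q, u ∉ A) then (X : Polynomial ℤ) ^ (t.card + q.card) else 0)
            = ∑ q : Finset (Fin 2), (X : Polynomial ℤ) ^ (t.card + q.card) :=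
              Finset.sum_congr rfl fun q _ => if_pos (hall q)
          _ = X ^ t.card * (1 + X) ^ 2 := by
              simp only [pow_add, ← Finset.mul_sum]
              rw [sum_univ_pow_card]
              norm_num
      · rw [if_neg hD]
        push_neg at hD
        obtain ⟨u, hut, huA⟩ := hD
        rw [Finset.sum_eq_single (∅ : Finset (Fin 2))]
        · rw [if_pos (fun u hu w hw => absurd hw (Finset.notMem_empty w)),
            Finset.card_empty, add_zero]
        · intro q _ hq
          obtain ⟨w, hw⟩ := Finset.nonempty_iff_ne_empty.2 hq
          exact if_neg (fun hc => (hc u hut w hw) huA)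
        · intro h; exact absurd (Finset.mem_univ _) h
    · rw [if_neg hP]
      simp [hP]
  rw [hL, hR]
  by_cases hP : (t : Set V).Pairwise (fun u v => ¬G.Adj u v)
  · rw [if_pos hP, if_pos hP]
    by_cases hD : ∀ u ∈ t, u ∉ A
    · rw [if_pos hD]
      have hAt : A \ t = A := Finset.sdiff_eq_self_iff_disjoint.2 (Finset.disjoint_right.2 hD)
      rw [hAt]
      have h2 : 2 * A.card - 2 + 2 = 2 * A.card := by have := hA.card_pos; omega
      rw [show ((1 + X : Polynomial ℤ)) ^ (2 * A.card) =
        (1 + X) ^ (2 * A.card - 2) * (1 + X) ^ 2 from by rw [← pow_add, h2]]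
      ring
    · push_neg at hD
      obtain ⟨u, hut, huA⟩ := hD
      rw [if_neg (by push_neg; exact ⟨u, hut, huA⟩)]
      have hint : A ∩ t = {u} := by
        ext b
        simp only [Finset.mem_inter, Finset.mem_singleton]
        constructor
        · rintro ⟨hbA, hbt⟩
          by_contra hne
          exact hP (Finset.mem_coe.2 hbt) (Finset.mem_coe.2 hut) hne (hclique hbA huA hne)
        · rintro rfl; exact ⟨huA, hut⟩
      have hcard : (A \ t).card = A.card - 1 := by
        have h := Finset.card_sdiff_add_card_inter A t
        rw [hint, Finset.card_singleton] at h
        omega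
      rw [hcard]
      have h3 : 2 * (A.card - 1) = 2 * A.card - 2 := by omega
      rw [h3, mul_comm]
  · rw [if_neg hP, if_neg hP, mul_zero]
end
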